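/- Under the five inequalities of the performance-estimation proof (interpolation inequalities between the triples (x₀,f₀,g₀), (x₁,f₁,g₁), (x*,f*,0), plus -g₀ᵀg₁ ≥ 0 and g₁ᵀ(x₀-x₁) ≥ 0, with 0 < μ < L), the following exact identity-based bound holds: f₁ - f* ≤ ((L-μ)/(L+μ))²(f₀-f*) - (μL(L+3μ)/(2(L+μ)²))‖x₀ - ((L+μ)/(L+3μ))x₁ - (2μ/(L+3μ))x* - ((3L+μ)/(L²+3μL))g₀ - ((L+μ)/(L²+3μL))g₁‖² - (2Lμ²/(L²+2Lμ-3μ²))‖x₁ - x* - ((L-μ)²/(2μL(L+μ)))g₀ - ((L+μ)/(2μL))g₁‖². -/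

import Mathlib

set_option maxHeartbeats 1000000 in
lemma key_scalar (μ L : ℝ) (hμ : 0 < μ) (hμL : μ < L)
    (pp pq pr pu pv qq qr qu qv rr ru rv uu uv vv f₀ f₁ fstar : ℝ)
    (H1 : 0 ≤ f₀ - (f₁ + (pv - qv) + 1 / (2 * (1 - μ / L)) *
      ((1 / L) * (uu - 2 * uv + vv) + μ * (pp - 2 * pq + qq)
        - (2 * μ / L) * (qv - pv - qu + pu))))
    (H2 : 0 ≤ fstar - (f₀ + (ru - pu) + 1 / (2 * (1 - μ / L)) *
      ((1 / L) * uu + μ * (rr - 2 * pr + pp) - (2 * μ / L) * (pu - ru))))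
    (H3 : 0 ≤ fstar - (f₁ + (rv - qv) + 1 / (2 * (1 - μ / L)) *
      ((1 / L) * vv + μ * (rr - 2 * qr + qq) - (2 * μ / L) * (qv - rv))))
    (H4 : 0 ≤ -uv) (H5 : 0 ≤ pv - qv) :
    f₁ - fstar ≤ ((L - μ) / (L + μ)) ^ 2 * (f₀ - fstar)
      - μ * L * (L + 3 * μ) / (2 * (L + μ) ^ 2) *
        (pp + ((L + μ) / (L + 3 * μ)) ^ 2 * qq + (2 * μ / (L + 3 * μ)) ^ 2 * rr
          + ((3 * L + μ) / (L ^ 2 + 3 * μ * L)) ^ 2 * uu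
          + ((L + μ) / (L ^ 2 + 3 * μ * L)) ^ 2 * vv
          - 2 * ((L + μ) / (L + 3 * μ)) * pq - 2 * (2 * μ / (L + 3 * μ)) * pr
          - 2 * ((3 * L + μ) / (L ^ 2 + 3 * μ * L)) * pu
          - 2 * ((L + μ) / (L ^ 2 + 3 * μ * L)) * pv
          + 2 * ((L + μ) / (L + 3 * μ)) * (2 * μ / (L + 3 * μ)) * qr
          + 2 * ((L + μ) / (L + 3 * μ)) * ((3 * L + μ) / (L ^ 2 + 3 * μ * L)) * qu
          + 2 * ((L + μ) / (L + 3 * μ)) * ((L + μ) / (L ^ 2 + 3 * μ * L)) * qv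
          + 2 * (2 * μ / (L + 3 * μ)) * ((3 * L + μ) / (L ^ 2 + 3 * μ * L)) * ru
          + 2 * (2 * μ / (L + 3 * μ)) * ((L + μ) / (L ^ 2 + 3 * μ * L)) * rv
          + 2 * ((3 * L + μ) / (L ^ 2 + 3 * μ * L)) * ((L + μ) / (L ^ 2 + 3 * μ * L)) * uv)
      - 2 * L * μ ^ 2 / (L ^ 2 + 2 * L * μ - 3 * μ ^ 2) *
        (qq + rr + ((L - μ) ^ 2 / (2 * μ * L * (L + μ))) ^ 2 * uu
          + ((L + μ) / (2 * μ * L)) ^ 2 * vv - 2 * qr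
          - 2 * ((L - μ) ^ 2 / (2 * μ * L * (L + μ))) * qu
          - 2 * ((L + μ) / (2 * μ * L)) * qv
          + 2 * ((L - μ) ^ 2 / (2 * μ * L * (L + μ))) * ru
          + 2 * ((L + μ) / (2 * μ * L)) * rv
          + 2 * ((L - μ) ^ 2 / (2 * μ * L * (L + μ))) * ((L + μ) / (2 * μ * L)) * uv) := by
  have hL : (0:ℝ) < L := hμ.trans hμL
  have e1 : L ≠ 0 := ne_of_gt hL
  have e2 : L - μ ≠ 0 := by intro h; linarith [sub_eq_zero.mp h]
  have e3 : L + μ ≠ 0 := by positivity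
  have e4 : L + 3 * μ ≠ 0 := by positivity
  have e5 : (1 : ℝ) - μ / L ≠ 0 := by
    have : (1:ℝ) - μ / L = (L - μ) / L := by field_simp
    rw [this]; exact div_ne_zero e2 e1
  have e6 : L ^ 2 + 3 * μ * L ≠ 0 := by positivity
  have e7 : L ^ 2 + 2 * L * μ - 3 * μ ^ 2 ≠ 0 := by nlinarith
  have e8 : μ ≠ 0 := ne_of_gt hμ
  have hl1 : 0 ≤ (L - μ) / (L + μ) := div_nonneg (by linarith) (by linarith)
  have hl2 : 0 ≤ 2 * μ * (L - μ) / (L + μ) ^ 2 := div_nonneg (by nlinarith) (by positivity)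
  have hl3 : 0 ≤ 2 * μ / (L + μ) := by positivity
  have hl4 : 0 ≤ 2 / (L + μ) := by positivity
  have m1 := mul_nonneg hl1 H1
  have m2 := mul_nonneg hl2 H2
  have m3 := mul_nonneg hl3 H3
  have m4 := mul_nonneg hl4 H4
  rw [← sub_nonneg]
  have key : (((L - μ) / (L + μ)) ^ 2 * (f₀ - fstar)
      - μ * L * (L + 3 * μ) / (2 * (L + μ) ^ 2) *
        (pp + ((L + μ) / (L + 3 * μ)) ^ 2 * qq + (2 * μ / (L + 3 * μ)) ^ 2 * rr
          + ((3 * L + μ) / (L ^ 2 + 3 * μ * L)) ^ 2 * uu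
          + ((L + μ) / (L ^ 2 + 3 * μ * L)) ^ 2 * vv
          - 2 * ((L + μ) / (L + 3 * μ)) * pq - 2 * (2 * μ / (L + 3 * μ)) * pr
          - 2 * ((3 * L + μ) / (L ^ 2 + 3 * μ * L)) * pu
          - 2 * ((L + μ) / (L ^ 2 + 3 * μ * L)) * pv
          + 2 * ((L + μ) / (L + 3 * μ)) * (2 * μ / (L + 3 * μ)) * qr
          + 2 * ((L + μ) / (L + 3 * μ)) * ((3 * L + μ) / (L ^ 2 + 3 * μ * L)) * qu
          + 2 * ((L + μ) / (L + 3 * μ)) * ((L + μ) / (L ^ 2 + 3 * μ * L)) * qv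
          + 2 * (2 * μ / (L + 3 * μ)) * ((3 * L + μ) / (L ^ 2 + 3 * μ * L)) * ru
          + 2 * (2 * μ / (L + 3 * μ)) * ((L + μ) / (L ^ 2 + 3 * μ * L)) * rv
          + 2 * ((3 * L + μ) / (L ^ 2 + 3 * μ * L)) * ((L + μ) / (L ^ 2 + 3 * μ * L)) * uv)
      - 2 * L * μ ^ 2 / (L ^ 2 + 2 * L * μ - 3 * μ ^ 2) *
        (qq + rr + ((L - μ) ^ 2 / (2 * μ * L * (L + μ))) ^ 2 * uu
          + ((L + μ) / (2 * μ * L)) ^ 2 * vv - 2 * qr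
          - 2 * ((L - μ) ^ 2 / (2 * μ * L * (L + μ))) * qu
          - 2 * ((L + μ) / (2 * μ * L)) * qv
          + 2 * ((L - μ) ^ 2 / (2 * μ * L * (L + μ))) * ru
          + 2 * ((L + μ) / (2 * μ * L)) * rv
          + 2 * ((L - μ) ^ 2 / (2 * μ * L * (L + μ))) * ((L + μ) / (2 * μ * L)) * uv))
      - (f₁ - fstar)
      = (L - μ) / (L + μ) * (f₀ - (f₁ + (pv - qv) + 1 / (2 * (1 - μ / L)) *
          ((1 / L) * (uu - 2 * uv + vv) + μ * (pp - 2 * pq + qq)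
            - (2 * μ / L) * (qv - pv - qu + pu))))
        + 2 * μ * (L - μ) / (L + μ) ^ 2 * (fstar - (f₀ + (ru - pu) + 1 / (2 * (1 - μ / L)) *
          ((1 / L) * uu + μ * (rr - 2 * pr + pp) - (2 * μ / L) * (pu - ru))))
        + 2 * μ / (L + μ) * (fstar - (f₁ + (rv - qv) + 1 / (2 * (1 - μ / L)) *
          ((1 / L) * vv + μ * (rr - 2 * qr + qq) - (2 * μ / L) * (qv - rv))))
        + 2 / (L + μ) * (-uv) + (pv - qv) := by
    rw [show L ^ 2 + 2 * L * μ - 3 * μ ^ 2 = (L - μ) * (L + 3 * μ) by ring]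
    field_simp
    ring
  linarith [m1, m2, m3, m4, H5, key]
open RealInnerProductSpace

def InterpIneq {n : ℕ} (μ L : ℝ) (xi xj : EuclideanSpace ℝ (Fin n)) (fi fj : ℝ)
    (gi gj : EuclideanSpace ℝ (Fin n)) : Prop :=
  fi ≥ fj + ⟪gj, xi - xj⟫ + 1 / (2 * (1 - μ / L)) *
    ((1 / L) * ‖gi - gj‖ ^ 2 + μ * ‖xi - xj‖ ^ 2 - (2 * μ / L) * ⟪gj - gi, xj - xi⟫)

set_option maxHeartbeats 2000000 in
theorem stmt6 {n : ℕ} (μ L : ℝ) (hμ : 0 < μ) (hμL : μ < L)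
    (x₀ x₁ xstar g₀ g₁ : EuclideanSpace ℝ (Fin n)) (f₀ f₁ fstar : ℝ)
    (h1 : InterpIneq μ L x₀ x₁ f₀ f₁ g₀ g₁)
    (h2 : InterpIneq μ L xstar x₀ fstar f₀ 0 g₀)
    (h3 : InterpIneq μ L xstar x₁ fstar f₁ 0 g₁)
    (h4 : -⟪g₀, g₁⟫ ≥ 0)
    (h5 : ⟪g₁, x₀ - x₁⟫ ≥ 0) :
    f₁ - fstar ≤ ((L - μ) / (L + μ)) ^ 2 * (f₀ - fstar)
      - μ * L * (L + 3 * μ) / (2 * (L + μ) ^ 2) *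
          ‖x₀ - ((L + μ) / (L + 3 * μ)) • x₁ - (2 * μ / (L + 3 * μ)) • xstar
            - ((3 * L + μ) / (L ^ 2 + 3 * μ * L)) • g₀
            - ((L + μ) / (L ^ 2 + 3 * μ * L)) • g₁‖ ^ 2
      - 2 * L * μ ^ 2 / (L ^ 2 + 2 * L * μ - 3 * μ ^ 2) *
          ‖x₁ - xstar - ((L - μ) ^ 2 / (2 * μ * L * (L + μ))) • g₀
            - ((L + μ) / (2 * μ * L)) • g₁‖ ^ 2 := by
  unfold InterpIneq at h1 h2 h3
  have H1 : (0:ℝ) ≤ f₀ - (f₁ + (⟪x₀, g₁⟫ - ⟪x₁, g₁⟫) + 1 / (2 * (1 - μ / L)) *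
      ((1 / L) * (⟪g₀, g₀⟫ - 2 * ⟪g₀, g₁⟫ + ⟪g₁, g₁⟫)
        + μ * (⟪x₀, x₀⟫ - 2 * ⟪x₀, x₁⟫ + ⟪x₁, x₁⟫)
        - (2 * μ / L) * (⟪x₁, g₁⟫ - ⟪x₀, g₁⟫ - ⟪x₁, g₀⟫ + ⟪x₀, g₀⟫))) := by
    have e : f₁ + ⟪g₁, x₀ - x₁⟫ + 1 / (2 * (1 - μ / L)) *
        ((1 / L) * ‖g₀ - g₁‖ ^ 2 + μ * ‖x₀ - x₁‖ ^ 2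
          - (2 * μ / L) * ⟪g₁ - g₀, x₁ - x₀⟫)
        = f₁ + (⟪x₀, g₁⟫ - ⟪x₁, g₁⟫) + 1 / (2 * (1 - μ / L)) *
        ((1 / L) * (⟪g₀, g₀⟫ - 2 * ⟪g₀, g₁⟫ + ⟪g₁, g₁⟫)
          + μ * (⟪x₀, x₀⟫ - 2 * ⟪x₀, x₁⟫ + ⟪x₁, x₁⟫)
          - (2 * μ / L) * (⟪x₁, g₁⟫ - ⟪x₀, g₁⟫ - ⟪x₁, g₀⟫ + ⟪x₀, g₀⟫)) := by
      simp only [← real_inner_self_eq_norm_sq, inner_sub_left, inner_sub_right,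
        real_inner_comm x₁ x₀, real_inner_comm g₀ x₀, real_inner_comm g₀ x₁,
        real_inner_comm g₁ x₀, real_inner_comm g₁ x₁, real_inner_comm g₁ g₀]
      ring
    linarith [h1, e]
  have H2 : (0:ℝ) ≤ fstar - (f₀ + (⟪xstar, g₀⟫ - ⟪x₀, g₀⟫) + 1 / (2 * (1 - μ / L)) *
      ((1 / L) * ⟪g₀, g₀⟫ + μ * (⟪xstar, xstar⟫ - 2 * ⟪x₀, xstar⟫ + ⟪x₀, x₀⟫)
        - (2 * μ / L) * (⟪x₀, g₀⟫ - ⟪xstar, g₀⟫))) := by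
    have e : f₀ + ⟪g₀, xstar - x₀⟫ + 1 / (2 * (1 - μ / L)) *
        ((1 / L) * ‖(0:EuclideanSpace ℝ (Fin n)) - g₀‖ ^ 2 + μ * ‖xstar - x₀‖ ^ 2
          - (2 * μ / L) * ⟪g₀ - 0, x₀ - xstar⟫)
        = f₀ + (⟪xstar, g₀⟫ - ⟪x₀, g₀⟫) + 1 / (2 * (1 - μ / L)) *
        ((1 / L) * ⟪g₀, g₀⟫ + μ * (⟪xstar, xstar⟫ - 2 * ⟪x₀, xstar⟫ + ⟪x₀, x₀⟫)
          - (2 * μ / L) * (⟪x₀, g₀⟫ - ⟪xstar, g₀⟫)) := by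
      simp only [← real_inner_self_eq_norm_sq, inner_sub_left, inner_sub_right, sub_zero,
        zero_sub, inner_neg_left, inner_neg_right, neg_neg,
        real_inner_comm xstar x₀, real_inner_comm g₀ x₀, real_inner_comm g₀ xstar]
      ring
    linarith [h2, e]
  have H3 : (0:ℝ) ≤ fstar - (f₁ + (⟪xstar, g₁⟫ - ⟪x₁, g₁⟫) + 1 / (2 * (1 - μ / L)) *
      ((1 / L) * ⟪g₁, g₁⟫ + μ * (⟪xstar, xstar⟫ - 2 * ⟪x₁, xstar⟫ + ⟪x₁, x₁⟫)
        - (2 * μ / L) * (⟪x₁, g₁⟫ - ⟪xstar, g₁⟫))) := by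
    have e : f₁ + ⟪g₁, xstar - x₁⟫ + 1 / (2 * (1 - μ / L)) *
        ((1 / L) * ‖(0:EuclideanSpace ℝ (Fin n)) - g₁‖ ^ 2 + μ * ‖xstar - x₁‖ ^ 2
          - (2 * μ / L) * ⟪g₁ - 0, x₁ - xstar⟫)
        = f₁ + (⟪xstar, g₁⟫ - ⟪x₁, g₁⟫) + 1 / (2 * (1 - μ / L)) *
        ((1 / L) * ⟪g₁, g₁⟫ + μ * (⟪xstar, xstar⟫ - 2 * ⟪x₁, xstar⟫ + ⟪x₁, x₁⟫)
          - (2 * μ / L) * (⟪x₁, g₁⟫ - ⟪xstar, g₁⟫)) := by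
      simp only [← real_inner_self_eq_norm_sq, inner_sub_left, inner_sub_right, sub_zero,
        zero_sub, inner_neg_left, inner_neg_right, neg_neg,
        real_inner_comm xstar x₁, real_inner_comm g₁ x₁, real_inner_comm g₁ xstar]
      ring
    linarith [h3, e]
  have H4 : (0:ℝ) ≤ -⟪g₀, g₁⟫ := h4
  have H5 : (0:ℝ) ≤ ⟪x₀, g₁⟫ - ⟪x₁, g₁⟫ := by
    have e : ⟪g₁, x₀ - x₁⟫ = ⟪x₀, g₁⟫ - ⟪x₁, g₁⟫ := by
      simp only [inner_sub_right, real_inner_comm g₁ x₀, real_inner_comm g₁ x₁]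
    linarith [h5, e.symm.le]
  have EW1 : ‖x₀ - ((L + μ) / (L + 3 * μ)) • x₁ - (2 * μ / (L + 3 * μ)) • xstar
        - ((3 * L + μ) / (L ^ 2 + 3 * μ * L)) • g₀
        - ((L + μ) / (L ^ 2 + 3 * μ * L)) • g₁‖ ^ 2
      = ⟪x₀, x₀⟫ + ((L + μ) / (L + 3 * μ)) ^ 2 * ⟪x₁, x₁⟫
        + (2 * μ / (L + 3 * μ)) ^ 2 * ⟪xstar, xstar⟫
        + ((3 * L + μ) / (L ^ 2 + 3 * μ * L)) ^ 2 * ⟪g₀, g₀⟫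
        + ((L + μ) / (L ^ 2 + 3 * μ * L)) ^ 2 * ⟪g₁, g₁⟫
        - 2 * ((L + μ) / (L + 3 * μ)) * ⟪x₀, x₁⟫
        - 2 * (2 * μ / (L + 3 * μ)) * ⟪x₀, xstar⟫
        - 2 * ((3 * L + μ) / (L ^ 2 + 3 * μ * L)) * ⟪x₀, g₀⟫
        - 2 * ((L + μ) / (L ^ 2 + 3 * μ * L)) * ⟪x₀, g₁⟫
        + 2 * ((L + μ) / (L + 3 * μ)) * (2 * μ / (L + 3 * μ)) * ⟪x₁, xstar⟫
        + 2 * ((L + μ) / (L + 3 * μ)) * ((3 * L + μ) / (L ^ 2 + 3 * μ * L)) * ⟪x₁, g₀⟫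
        + 2 * ((L + μ) / (L + 3 * μ)) * ((L + μ) / (L ^ 2 + 3 * μ * L)) * ⟪x₁, g₁⟫
        + 2 * (2 * μ / (L + 3 * μ)) * ((3 * L + μ) / (L ^ 2 + 3 * μ * L)) * ⟪xstar, g₀⟫
        + 2 * (2 * μ / (L + 3 * μ)) * ((L + μ) / (L ^ 2 + 3 * μ * L)) * ⟪xstar, g₁⟫
        + 2 * ((3 * L + μ) / (L ^ 2 + 3 * μ * L)) * ((L + μ) / (L ^ 2 + 3 * μ * L)) * ⟪g₀, g₁⟫ := by
    simp only [← real_inner_self_eq_norm_sq, inner_sub_left, inner_sub_right,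
      real_inner_smul_left, real_inner_smul_right,
      real_inner_comm x₁ x₀, real_inner_comm xstar x₀, real_inner_comm xstar x₁,
      real_inner_comm g₀ x₀, real_inner_comm g₀ x₁, real_inner_comm g₀ xstar,
      real_inner_comm g₁ x₀, real_inner_comm g₁ x₁, real_inner_comm g₁ xstar,
      real_inner_comm g₁ g₀]
    ring
  have EW2 : ‖x₁ - xstar - ((L - μ) ^ 2 / (2 * μ * L * (L + μ))) • g₀
        - ((L + μ) / (2 * μ * L)) • g₁‖ ^ 2
      = ⟪x₁, x₁⟫ + ⟪xstar, xstar⟫ + ((L - μ) ^ 2 / (2 * μ * L * (L + μ))) ^ 2 * ⟪g₀, g₀⟫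
        + ((L + μ) / (2 * μ * L)) ^ 2 * ⟪g₁, g₁⟫ - 2 * ⟪x₁, xstar⟫
        - 2 * ((L - μ) ^ 2 / (2 * μ * L * (L + μ))) * ⟪x₁, g₀⟫
        - 2 * ((L + μ) / (2 * μ * L)) * ⟪x₁, g₁⟫
        + 2 * ((L - μ) ^ 2 / (2 * μ * L * (L + μ))) * ⟪xstar, g₀⟫
        + 2 * ((L + μ) / (2 * μ * L)) * ⟪xstar, g₁⟫
        + 2 * ((L - μ) ^ 2 / (2 * μ * L * (L + μ))) * ((L + μ) / (2 * μ * L)) * ⟪g₀, g₁⟫ := by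
    simp only [← real_inner_self_eq_norm_sq, inner_sub_left, inner_sub_right,
      real_inner_smul_left, real_inner_smul_right,
      real_inner_comm xstar x₁, real_inner_comm g₀ x₁, real_inner_comm g₀ xstar,
      real_inner_comm g₁ x₁, real_inner_comm g₁ xstar, real_inner_comm g₁ g₀]
    ring
  rw [EW1, EW2]
  exact key_scalar μ L hμ hμL ⟪x₀, x₀⟫ ⟪x₀, x₁⟫ ⟪x₀, xstar⟫ ⟪x₀, g₀⟫ ⟪x₀, g₁⟫
    ⟪x₁, x₁⟫ ⟪x₁, xstar⟫ ⟪x₁, g₀⟫ ⟪x₁, g₁⟫ ⟪xstar, xstar⟫ ⟪xstar, g₀⟫ ⟪xstar, g₁⟫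
    ⟪g₀, g₀⟫ ⟪g₀, g₁⟫ ⟪g₁, g₁⟫ f₀ f₁ fstar H1 H2 H3 H4 H5
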